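/- Every x ∈ c₀^λ(F̂) has a unique representation x = ∑_k α_k b^{(k)} converging in the norm ‖·‖ = sup_n |F̄_n(·)|, where α_k = F̄_k(x); that is, the sequence (b^{(k)}) is a Schauder basis of c₀^λ(F̂). -/

import Mathlib

open Filter Finset

noncomputable def fibR : ℕ → ℝ
  | 0 => 1
  | 1 => 1
  | (n + 2) => fibR (n + 1) + fibR n

noncomputable def Fhat (x : ℕ → ℝ) (n : ℕ) : ℝ :=
  fibR n / fibR (n + 1) * x n - fibR (n + 1) / fibR n * (if n = 0 then 0 else x (n - 1))

noncomputable def Fbar (Λ : ℕ → ℝ) (x : ℕ → ℝ) (n : ℕ) : ℝ :=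
  (1 / Λ n) * ∑ k ∈ Finset.range (n + 1),
    (Λ k - if k = 0 then 0 else Λ (k - 1)) *
      (fibR k / fibR (k + 1) * x k -
        fibR (k + 1) / fibR k * (if k = 0 then 0 else x (k - 1)))

noncomputable def bseq (Λ : ℕ → ℝ) (k n : ℕ) : ℝ :=
  if n < k then 0
  else if n = k then
    (Λ k / (Λ k - if k = 0 then 0 else Λ (k - 1))) * (fibR (k + 1) ^ 2 / (fibR k * fibR (k + 1)))
  else
    (Λ k / (Λ k - if k = 0 then 0 else Λ (k - 1))) * (fibR (n + 1) ^ 2 / (fibR k * fibR (k + 1)))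
      - (Λ k / (Λ (k + 1) - Λ k)) * (fibR (n + 1) ^ 2 / (fibR (k + 1) * fibR (k + 2)))

lemma fibR_pos : ∀ n, 0 < fibR n := by
  intro n
  induction n using Nat.twoStepInduction with
  | zero => norm_num [fibR]
  | one => norm_num [fibR]
  | more n ih1 ih2 => rw [fibR]; linarith

lemma fibR_ne (n : ℕ) : fibR n ≠ 0 := (fibR_pos n).ne'

lemma alg1 (a b L d : ℝ) (ha : a ≠ 0) (hb : b ≠ 0) (hd : d ≠ 0) :
    a / b * (L / d * (b ^ 2 / (a * b))) = L / d := by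
  field_simp

lemma alg2 (fa fb fc L d1 d2 : ℝ) (ha : fa ≠ 0) (hb : fb ≠ 0) (hc : fc ≠ 0)
    (h1 : d1 ≠ 0) (h2 : d2 ≠ 0) :
    fb / fc * (L / d1 * (fc ^ 2 / (fa * fb)) - L / d2 * (fc ^ 2 / (fb * fc)))
      - fc / fb * (L / d1 * (fb ^ 2 / (fa * fb))) = -(L / d2) := by
  field_simp; ring

lemma alg3 (fa fb fc fn fm L d1 d2 : ℝ) (ha : fa ≠ 0) (hb : fb ≠ 0) (hc : fc ≠ 0)
    (hn : fn ≠ 0) (hm : fm ≠ 0) (h1 : d1 ≠ 0) (h2 : d2 ≠ 0) :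
    fn / fm * (L / d1 * (fm ^ 2 / (fa * fb)) - L / d2 * (fm ^ 2 / (fb * fc)))
      - fm / fn * (L / d1 * (fn ^ 2 / (fa * fb)) - L / d2 * (fn ^ 2 / (fb * fc))) = 0 := by
  field_simp; ring

/-- the Fhat-style operator inside Fbar -/
noncomputable def Hop (x : ℕ → ℝ) (j : ℕ) : ℝ :=
  fibR j / fibR (j + 1) * x j - fibR (j + 1) / fibR j * (if j = 0 then 0 else x (j - 1))

lemma Fbar_def (Λ x : ℕ → ℝ) (n : ℕ) :
    Fbar Λ x n = (1 / Λ n) * ∑ j ∈ Finset.range (n + 1),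
      (Λ j - if j = 0 then 0 else Λ (j - 1)) * Hop x j := rfl

lemma Hop_sub (x y : ℕ → ℝ) (j : ℕ) :
    Hop (fun i => x i - y i) j = Hop x j - Hop y j := by
  unfold Hop; split_ifs <;> ring

lemma Hop_sum (s : Finset ℕ) (c : ℕ → ℝ) (b : ℕ → ℕ → ℝ) (j : ℕ) :
    Hop (fun i => ∑ k ∈ s, c k * b k i) j = ∑ k ∈ s, c k * Hop (b k) j := by
  unfold Hop
  split_ifs with h
  · simp [Finset.mul_sum, mul_left_comm]
  · rw [Finset.mul_sum, Finset.mul_sum, ← Finset.sum_sub_distrib]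
    refine Finset.sum_congr rfl fun k _ => ?_
    ring

lemma Fbar_linear (Λ x : ℕ → ℝ) (c : ℕ → ℝ) (b : ℕ → ℕ → ℝ) (s : Finset ℕ) (n : ℕ) :
    Fbar Λ (fun i => x i - ∑ k ∈ s, c k * b k i) n
      = Fbar Λ x n - ∑ k ∈ s, c k * Fbar Λ (b k) n := by
  have key : ∑ j ∈ Finset.range (n + 1),
      (Λ j - if j = 0 then 0 else Λ (j - 1)) * Hop (fun i => x i - ∑ k ∈ s, c k * b k i) j
      = ∑ j ∈ Finset.range (n + 1), (Λ j - if j = 0 then 0 else Λ (j - 1)) * Hop x j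
        - ∑ k ∈ s, c k * ∑ j ∈ Finset.range (n + 1),
            (Λ j - if j = 0 then 0 else Λ (j - 1)) * Hop (b k) j := by
    simp only [Hop_sub, Hop_sum, mul_sub, Finset.mul_sum]
    rw [Finset.sum_sub_distrib]
    congr 1
    rw [Finset.sum_comm]
    refine Finset.sum_congr rfl fun k _ => ?_
    refine Finset.sum_congr rfl fun j _ => ?_
    ring
  simp only [Fbar_def]
  rw [key, mul_sub]
  congr 1
  rw [Finset.mul_sum]
  refine Finset.sum_congr rfl fun k _ => ?_
  ring

lemma delta_pos (Λ : ℕ → ℝ) (hmono : StrictMono Λ) (hpos : ∀ k, 0 < Λ k) (k : ℕ) :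
    0 < Λ k - (if k = 0 then 0 else Λ (k - 1)) := by
  split_ifs with h
  · simpa using hpos k
  · have : Λ (k - 1) < Λ k := hmono (Nat.pred_lt h)
    linarith

lemma Hop_bseq (Λ : ℕ → ℝ) (hmono : StrictMono Λ) (hpos : ∀ k, 0 < Λ k) (k n : ℕ) :
    Hop (bseq Λ k) n =
      if n = k then Λ k / (Λ k - if k = 0 then 0 else Λ (k - 1))
      else if n = k + 1 then -(Λ k / (Λ (k + 1) - Λ k)) else 0 := by
  have hδ : (Λ k - if k = 0 then 0 else Λ (k - 1)) ≠ 0 := (delta_pos Λ hmono hpos k).ne'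
  have hδ2 : Λ (k + 1) - Λ k ≠ 0 := sub_ne_zero.mpr (hmono (Nat.lt_succ_self k)).ne'
  rcases lt_trichotomy n k with hlt | rfl | hgt
  · -- n < k
    have h1 : bseq Λ k n = 0 := by simp [bseq, hlt]
    rw [if_neg hlt.ne, if_neg (by omega)]
    unfold Hop
    rw [h1]
    split_ifs with h0
    · ring
    · have : bseq Λ k (n - 1) = 0 := by
        have : n - 1 < k := by omega
        simp [bseq, this]
      rw [this]; ring
  · -- n = k
    rw [if_pos rfl]
    unfold Hop
    have hb : bseq Λ n n = (Λ n / (Λ n - if n = 0 then 0 else Λ (n - 1))) *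
        (fibR (n + 1) ^ 2 / (fibR n * fibR (n + 1))) := by
      simp [bseq]
    have hz : (if n = 0 then (0:ℝ) else bseq Λ n (n - 1)) = 0 := by
      split_ifs with h0
      · rfl
      · have : n - 1 < n := Nat.pred_lt h0
        simp [bseq, this]
    rw [hb, hz, mul_zero, sub_zero]
    exact alg1 _ _ _ _ (fibR_ne n) (fibR_ne (n + 1)) hδ
  · -- n > k
    rw [if_neg hgt.ne']
    rcases eq_or_lt_of_le (Nat.succ_le_of_lt hgt) with heq | hgt2
    · -- n = k + 1
      rw [if_pos heq.symm]
      subst heq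
      unfold Hop
      have hb1 : bseq Λ k (k + 1) =
          (Λ k / (Λ k - if k = 0 then 0 else Λ (k - 1))) *
            (fibR (k + 2) ^ 2 / (fibR k * fibR (k + 1)))
          - (Λ k / (Λ (k + 1) - Λ k)) * (fibR (k + 2) ^ 2 / (fibR (k + 1) * fibR (k + 2))) := by
        simp [bseq]
      have hb0 : bseq Λ k (k + 1 - 1) = (Λ k / (Λ k - if k = 0 then 0 else Λ (k - 1))) *
          (fibR (k + 1) ^ 2 / (fibR k * fibR (k + 1))) := by
        simp [bseq]
      rw [if_neg (Nat.succ_ne_zero k), hb1, hb0]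
      exact alg2 _ _ _ _ _ _ (fibR_ne k) (fibR_ne (k + 1)) (fibR_ne (k + 2)) hδ hδ2
    · -- n ≥ k + 2
      rw [if_neg (by omega)]
      unfold Hop
      have hb1 : bseq Λ k n =
          (Λ k / (Λ k - if k = 0 then 0 else Λ (k - 1))) *
            (fibR (n + 1) ^ 2 / (fibR k * fibR (k + 1)))
          - (Λ k / (Λ (k + 1) - Λ k)) * (fibR (n + 1) ^ 2 / (fibR (k + 1) * fibR (k + 2))) := by
        have h4 : ¬ n < k := by omega
        have h5 : n ≠ k := by omega
        simp [bseq, h4, h5]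
      have hn0 : n ≠ 0 := by omega
      have hb0 : bseq Λ k (n - 1) =
          (Λ k / (Λ k - if k = 0 then 0 else Λ (k - 1))) *
            (fibR n ^ 2 / (fibR k * fibR (k + 1)))
          - (Λ k / (Λ (k + 1) - Λ k)) * (fibR n ^ 2 / (fibR (k + 1) * fibR (k + 2))) := by
        have h4 : ¬ n - 1 < k := by omega
        have h5 : n - 1 ≠ k := by omega
        have h6 : n - 1 + 1 = n := by omega
        simp [bseq, h4, h5, h6]
      rw [if_neg hn0, hb1, hb0]
      exact alg3 _ _ _ _ _ _ _ _ (fibR_ne k) (fibR_ne (k + 1)) (fibR_ne (k + 2))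
        (fibR_ne n) (fibR_ne (n + 1)) hδ hδ2

lemma Fbar_bseq (Λ : ℕ → ℝ) (hmono : StrictMono Λ) (hpos : ∀ k, 0 < Λ k) (k n : ℕ) :
    Fbar Λ (bseq Λ k) n = if n = k then 1 else 0 := by
  have hΛ : ∀ m, Λ m ≠ 0 := fun m => (hpos m).ne'
  have hd : ∀ j, (Λ j - if j = 0 then 0 else Λ (j - 1)) ≠ 0 :=
    fun j => (delta_pos Λ hmono hpos j).ne'
  rw [Fbar_def]
  have hsum : ∀ j, (Λ j - if j = 0 then 0 else Λ (j - 1)) * Hop (bseq Λ k) j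
      = (if j = k then Λ k else 0) + (if j = k + 1 then -Λ k else 0) := by
    intro j
    rw [Hop_bseq Λ hmono hpos]
    rcases eq_or_ne j k with rfl | hjk
    · have h1 : j ≠ j + 1 := (Nat.lt_succ_self j).ne
      rw [if_pos rfl, if_pos rfl, if_neg h1, add_zero, mul_comm,
        div_mul_cancel₀ _ (hd j)]
    · rw [if_neg hjk]
      rcases eq_or_ne j (k + 1) with rfl | hjk2
      · rw [if_pos rfl, if_neg hjk, if_pos rfl, zero_add, if_neg (Nat.succ_ne_zero k),
          Nat.add_sub_cancel, mul_neg, mul_comm, div_mul_cancel₀ _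
            (sub_ne_zero.mpr (hmono (Nat.lt_succ_self k)).ne')]
      · rw [if_neg hjk2, if_neg hjk, if_neg hjk2, mul_zero, add_zero]
  rw [Finset.sum_congr rfl fun j _ => hsum j, Finset.sum_add_distrib,
    Finset.sum_ite_eq' (Finset.range (n + 1)) k (fun _ => Λ k),
    Finset.sum_ite_eq' (Finset.range (n + 1)) (k + 1) (fun _ => -Λ k)]
  simp only [Finset.mem_range]
  rcases lt_trichotomy n k with hlt | rfl | hgt
  · rw [if_neg (by omega), if_neg (by omega), if_neg hlt.ne]
    ring
  · rw [if_pos (by omega), if_neg (by omega), if_pos rfl, add_zero, one_div,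
      inv_mul_cancel₀ (hΛ n)]
  · rw [if_pos (by omega), if_pos (by omega), if_neg hgt.ne']
    ring

theorem bseq_schauder_basis (Λ : ℕ → ℝ) (hmono : StrictMono Λ) (hpos : ∀ k, 0 < Λ k)
    (hlim : Tendsto Λ atTop atTop) (x : ℕ → ℝ)
    (hx : Tendsto (Fbar Λ x) atTop (nhds 0)) :
    (∀ ε : ℝ, 0 < ε → ∃ M, ∀ m, M ≤ m → ∀ n,
      |Fbar Λ (fun i => x i - ∑ k ∈ Finset.range (m + 1), Fbar Λ x k * bseq Λ k i) n| ≤ ε) ∧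
    (∀ β : ℕ → ℝ,
      (∀ ε : ℝ, 0 < ε → ∃ M, ∀ m, M ≤ m → ∀ n,
        |Fbar Λ (fun i => x i - ∑ k ∈ Finset.range (m + 1), β k * bseq Λ k i) n| ≤ ε) →
      ∀ k, β k = Fbar Λ x k) := by
  have key : ∀ (c : ℕ → ℝ) (m n : ℕ),
      Fbar Λ (fun i => x i - ∑ k ∈ Finset.range (m + 1), c k * bseq Λ k i) n
        = Fbar Λ x n - (if n ≤ m then c n else 0) := by
    intro c m n
    rw [Fbar_linear]
    congr 1
    have h1 : ∀ k, c k * Fbar Λ (bseq Λ k) n = if k = n then c k else 0 := by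
      intro k
      rw [Fbar_bseq Λ hmono hpos]
      split_ifs with ha hb hb <;> simp_all
    rw [Finset.sum_congr rfl fun k _ => h1 k,
      Finset.sum_ite_eq' (Finset.range (m + 1)) n (fun k => c k)]
    simp only [Finset.mem_range]
    split_ifs with ha hb hb <;> first | rfl | omega
  constructor
  · intro ε hε
    obtain ⟨M, hM⟩ := (Metric.tendsto_atTop.mp hx) ε hε
    refine ⟨M, fun m hm n => ?_⟩
    rw [key]
    split_ifs with h
    · simp [hε.le]
    · have hn : M ≤ n := by omega
      have := hM n hn
      rw [Real.dist_eq, sub_zero] at this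
      simpa using this.le
  · intro β hβ k
    by_contra hne
    have hd : 0 < |Fbar Λ x k - β k| := by
      rw [abs_pos]
      intro h
      have h2 := sub_eq_zero.mp h
      exact hne h2.symm
    obtain ⟨M, hM⟩ := hβ (|Fbar Λ x k - β k| / 2) (by linarith)
    have hh := hM (max M k) (le_max_left _ _) k
    rw [key, if_pos (le_max_right _ _)] at hh
    linarith [le_abs_self (Fbar Λ x k - β k), neg_abs_le (Fbar Λ x k - β k)]
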